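/- Let e ∈ ℝⁿ have i.i.d. entries e_i ~ N(0, σ²), and let X̃ be an n×p real matrix whose columns X̃_i each have unit Euclidean norm. Define the event E = {e : for all γ ∈ {0,1}^p, ‖X̃_γᵀ e‖₂² ≤ 4σ²(1+α)|γ| log p}, where X̃_γ is the submatrix of X̃ consisting of columns i with γ_i = 1 and |γ| is the number of ones in γ. Then Pr(E) > 1 - 1/(p^α √(π log p)). -/

import Mathlib

open MeasureTheory ProbabilityTheory Real Filter Set
open scoped NNReal ENNReal

section Aux

lemma integrable_exp_quad {b : ℝ} (hb : 0 < b) (c : ℝ) :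
    Integrable fun x : ℝ => rexp (-b * x ^ 2 + c * x) := by
  have h : ∀ x : ℝ, -b * x ^ 2 + c * x = -b * (x - c / (2 * b)) ^ 2 + c ^ 2 / (4 * b) := by
    intro x; field_simp; ring
  simp_rw [h, Real.exp_add]
  exact ((integrable_exp_neg_mul_sq hb).comp_sub_right (c / (2 * b))).mul_const _

lemma integral_exp_quad {b : ℝ} (hb : 0 < b) (c : ℝ) :
    ∫ x : ℝ, rexp (-b * x ^ 2 + c * x) = Real.sqrt (π / b) * rexp (c ^ 2 / (4 * b)) := by
  have h : ∀ x : ℝ, -b * x ^ 2 + c * x = -b * (x - c / (2 * b)) ^ 2 + c ^ 2 / (4 * b) := by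
    intro x; field_simp; ring
  simp_rw [h, Real.exp_add]
  rw [MeasureTheory.integral_mul_const,
    integral_sub_right_eq_self (fun x => rexp (-b * x ^ 2)) (c / (2 * b)), integral_gaussian]

lemma integral_Ioi_mul_exp {b : ℝ} (hb : 0 < b) (t : ℝ) :
    ∫ x in Ioi t, x * rexp (-b * x ^ 2) = rexp (-b * t ^ 2) / (2 * b) := by
  have A : ∀ x : ℝ, HasDerivAt (fun x : ℝ => -(2 * b)⁻¹ * rexp (-b * x ^ 2))
      (x * rexp (-b * x ^ 2)) x := by
    intro x
    convert (((hasDerivAt_pow 2 x).const_mul (-b)).exp.const_mul (-(2 * b)⁻¹)) using 1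
    · rfl
    · rfl
    field_simp
    ring
  have B : Tendsto (fun y : ℝ => -(2 * b)⁻¹ * rexp (-b * y ^ 2)) atTop (nhds (-(2 * b)⁻¹ * 0)) := by
    refine Tendsto.const_mul _ ?_
    exact Real.tendsto_exp_atBot.comp
      ((tendsto_pow_atTop two_ne_zero).const_mul_atTop_of_neg (neg_lt_zero.2 hb))
  rw [integral_Ioi_of_hasDerivAt_of_tendsto' (fun x _ => A x)
    (integrable_mul_exp_neg_mul_sq hb).integrableOn B]
  field_simp
  ring

lemma pdf_prod_eq {v w : ℝ≥0} (hv : v ≠ 0) (hw : w ≠ 0) (x y : ℝ) :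
    gaussianPDFReal 0 v (x - y) * gaussianPDFReal 0 w y
      = ((Real.sqrt (2 * π * v))⁻¹ * (Real.sqrt (2 * π * w))⁻¹ * rexp (-(x ^ 2 / (2 * v)))) *
        rexp (-((v + w) / (2 * v * w)) * y ^ 2 + (x / v) * y) := by
  have hv' : (v : ℝ) ≠ 0 := by exact_mod_cast hv
  have hw' : (w : ℝ) ≠ 0 := by exact_mod_cast hw
  have hexp : -(x - y - 0) ^ 2 / (2 * (v : ℝ)) + -(y - 0) ^ 2 / (2 * (w : ℝ))
      = -(x ^ 2 / (2 * (v : ℝ))) + (-(((v : ℝ) + w) / (2 * v * w)) * y ^ 2 + (x / v) * y) := by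
    field_simp
    ring
  simp only [gaussianPDFReal]
  rw [mul_mul_mul_comm, ← Real.exp_add, hexp, Real.exp_add]
  ring

lemma integrable_pdf_conv {v w : ℝ≥0} (hv : v ≠ 0) (hw : w ≠ 0) (x : ℝ) :
    Integrable fun y : ℝ => gaussianPDFReal 0 v (x - y) * gaussianPDFReal 0 w y := by
  have hv' : (0 : ℝ) < v := lt_of_le_of_ne v.coe_nonneg (by exact_mod_cast hv.symm)
  have hw' : (0 : ℝ) < w := lt_of_le_of_ne w.coe_nonneg (by exact_mod_cast hw.symm)
  have hb : (0 : ℝ) < ((v : ℝ) + w) / (2 * v * w) := by positivity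
  simp_rw [pdf_prod_eq hv hw x]
  exact (integrable_exp_quad hb _).const_mul _

lemma integral_pdf_conv {v w : ℝ≥0} (hv : v ≠ 0) (hw : w ≠ 0) (x : ℝ) :
    ∫ y : ℝ, gaussianPDFReal 0 v (x - y) * gaussianPDFReal 0 w y
      = gaussianPDFReal 0 (v + w) x := by
  have hv' : (0 : ℝ) < v := lt_of_le_of_ne v.coe_nonneg (by exact_mod_cast hv.symm)
  have hw' : (0 : ℝ) < w := lt_of_le_of_ne w.coe_nonneg (by exact_mod_cast hw.symm)
  have hb : (0 : ℝ) < ((v : ℝ) + w) / (2 * v * w) := by positivity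
  simp_rw [pdf_prod_eq hv hw x]
  rw [MeasureTheory.integral_const_mul, integral_exp_quad hb]
  simp only [gaussianPDFReal, sub_zero, NNReal.coe_add]
  have hconst : (Real.sqrt (2 * π * v))⁻¹ * (Real.sqrt (2 * π * w))⁻¹ *
      Real.sqrt (π / (((v : ℝ) + w) / (2 * v * w)))
      = (Real.sqrt (2 * π * ((v : ℝ) + w)))⁻¹ := by
    rw [← Real.sqrt_inv, ← Real.sqrt_inv, ← Real.sqrt_mul (by positivity),
      ← Real.sqrt_mul (by positivity), ← Real.sqrt_inv]
    congr 1
    field_simp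
  have hexp : -(x ^ 2 / (2 * (v : ℝ))) + (x / v) ^ 2 / (4 * (((v : ℝ) + w) / (2 * v * w)))
      = -x ^ 2 / (2 * ((v : ℝ) + w)) := by
    field_simp
    ring
  calc (Real.sqrt (2 * π * v))⁻¹ * (Real.sqrt (2 * π * w))⁻¹ * rexp (-(x ^ 2 / (2 * v))) *
        (Real.sqrt (π / (((v : ℝ) + w) / (2 * v * w))) * rexp ((x / v) ^ 2 / (4 * (((v : ℝ) + w) / (2 * v * w)))))
      = ((Real.sqrt (2 * π * v))⁻¹ * (Real.sqrt (2 * π * w))⁻¹ *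
          Real.sqrt (π / (((v : ℝ) + w) / (2 * v * w)))) *
        rexp (-(x ^ 2 / (2 * (v : ℝ))) + (x / v) ^ 2 / (4 * (((v : ℝ) + w) / (2 * v * w)))) := by
        rw [Real.exp_add]; ring
    _ = (Real.sqrt (2 * π * ((v : ℝ) + w)))⁻¹ * rexp (-x ^ 2 / (2 * ((v : ℝ) + w))) := by
        rw [hconst, hexp]

lemma gaussianPDFReal_shift (w : ℝ≥0) (x z : ℝ) :
    gaussianPDFReal x w z = gaussianPDFReal 0 w (z - x) := by
  simp [gaussianPDFReal]

lemma gaussian_conv (v w : ℝ≥0) :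
    Measure.map (fun q : ℝ × ℝ => q.1 + q.2) ((gaussianReal 0 v).prod (gaussianReal 0 w)) =
      gaussianReal 0 (v + w) := by
  by_cases hv : v = 0
  · subst hv
    rw [gaussianReal_zero_var, Measure.dirac_prod,
      Measure.map_map measurable_add measurable_prodMk_left]
    have : ((fun q : ℝ × ℝ => q.1 + q.2) ∘ Prod.mk (0 : ℝ)) = id := by
      funext y; simp
    rw [this, Measure.map_id, zero_add]
  by_cases hw : w = 0
  · subst hw
    rw [gaussianReal_zero_var, Measure.prod_dirac,
      Measure.map_map measurable_add measurable_prodMk_right]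
    have : ((fun q : ℝ × ℝ => q.1 + q.2) ∘ (fun x : ℝ => (x, (0:ℝ)))) = id := by
      funext y; simp
    rw [this, Measure.map_id, add_zero]
  -- main case
  have hFm : Measurable (Function.uncurry fun x z : ℝ => gaussianPDF x w z) := by
    have : Measurable fun q : ℝ × ℝ => gaussianPDFReal 0 w (q.2 - q.1) :=
      (measurable_gaussianPDFReal 0 w).comp (measurable_snd.sub measurable_fst)
    have h2 : (Function.uncurry fun x z : ℝ => gaussianPDF x w z)
        = fun q : ℝ × ℝ => ENNReal.ofReal (gaussianPDFReal 0 w (q.2 - q.1)) := by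
      funext q
      simp [Function.uncurry, gaussianPDF, gaussianPDFReal_shift]
    rw [h2]
    exact this.ennreal_ofReal
  refine Measure.ext fun s hs => ?_
  rw [Measure.map_apply measurable_add hs, Measure.prod_apply (measurable_add hs)]
  have h1 : ∀ x : ℝ, (gaussianReal 0 w) (Prod.mk x ⁻¹' ((fun q : ℝ × ℝ => q.1 + q.2) ⁻¹' s))
      = ∫⁻ z in s, gaussianPDF x w z := by
    intro x
    have hpre : (Prod.mk x ⁻¹' ((fun q : ℝ × ℝ => q.1 + q.2) ⁻¹' s)) = (fun y => x + y) ⁻¹' s := rfl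
    rw [hpre, ← Measure.map_apply (measurable_const_add x) hs, gaussianReal_map_const_add,
      zero_add, gaussianReal_apply x hw s]
  simp_rw [h1]
  have hg : Measurable fun x : ℝ => ∫⁻ z in s, gaussianPDF x w z :=
    Measurable.lintegral_prod_right hFm
  rw [gaussianReal_of_var_ne_zero 0 hv,
    lintegral_withDensity_eq_lintegral_mul _ (measurable_gaussianPDF 0 v) hg]
  have h2 : ∀ x : ℝ, (gaussianPDF 0 v * fun x => ∫⁻ z in s, gaussianPDF x w z) x
      = ∫⁻ z in s, gaussianPDF 0 v x * gaussianPDF x w z := by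
    intro x
    simp only [Pi.mul_apply]
    have hx : Measurable fun z : ℝ => gaussianPDF x w z := measurable_gaussianPDF x w
    exact (lintegral_const_mul _ hx).symm
  simp_rw [h2]
  rw [lintegral_lintegral_swap]
  · have h3 : ∀ z : ℝ, ∫⁻ x : ℝ, gaussianPDF 0 v x * gaussianPDF x w z
        = gaussianPDF 0 (v + w) z := by
      intro z
      have hinteg : Integrable fun x : ℝ => gaussianPDFReal 0 w (z - x) * gaussianPDFReal 0 v x :=
        integrable_pdf_conv hw hv z
      calc ∫⁻ x : ℝ, gaussianPDF 0 v x * gaussianPDF x w z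
          = ∫⁻ x : ℝ, ENNReal.ofReal (gaussianPDFReal 0 w (z - x) * gaussianPDFReal 0 v x) := by
            congr 1
            funext x
            rw [gaussianPDF, gaussianPDF, gaussianPDFReal_shift w x z,
              ← ENNReal.ofReal_mul (gaussianPDFReal_nonneg _ _ _),
              mul_comm (gaussianPDFReal 0 v x)]
        _ = ENNReal.ofReal (∫ x : ℝ, gaussianPDFReal 0 w (z - x) * gaussianPDFReal 0 v x) := by
            rw [← ofReal_integral_eq_lintegral_ofReal hinteg]
            exact ae_of_all _ fun x =>
              mul_nonneg (gaussianPDFReal_nonneg _ _ _) (gaussianPDFReal_nonneg _ _ _)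
        _ = gaussianPDF 0 (v + w) z := by
            rw [integral_pdf_conv hw hv z, add_comm w v, gaussianPDF]
    simp_rw [h3]
    rw [← gaussianReal_apply 0 (by simp [hv]) s]
  · exact (((measurable_gaussianPDF 0 v).comp measurable_fst).mul hFm).aemeasurable

lemma map_weighted_sum (v : ℝ≥0) : ∀ (n : ℕ) (a : Fin n → ℝ),
    Measure.map (fun e : Fin n → ℝ => ∑ j, a j * e j)
        (Measure.pi fun _ : Fin n => gaussianReal 0 v)
      = gaussianReal 0 (Real.toNNReal (∑ j, a j ^ 2) * v)
  | 0, a => by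
      have h : (fun e : Fin 0 → ℝ => ∑ j, a j * e j) = fun _ => (0 : ℝ) := by
        funext e; simp
      rw [h, Measure.map_const]
      simp [gaussianReal_zero_var]
  | (m + 1), a => by
      set μ : Measure ℝ := gaussianReal 0 v with hμ
      have hmp := measurePreserving_piFinSuccAbove (fun _ : Fin (m + 1) => μ) 0
      set φ := MeasurableEquiv.piFinSuccAbove (fun _ : Fin (m + 1) => ℝ) 0 with hφdef
      have hf2 : Measurable fun y : Fin m → ℝ => ∑ j, a j.succ * y j :=
        Finset.measurable_sum _ fun j _ => (measurable_pi_apply j).const_mul _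
      have hf1 : Measurable fun x : ℝ => a 0 * x := measurable_const_mul _
      have hg : Measurable fun q : ℝ × (Fin m → ℝ) => a 0 * q.1 + ∑ j, a j.succ * q.2 j :=
        (hf1.comp measurable_fst).add (hf2.comp measurable_snd)
      have hcomp : (fun e : Fin (m + 1) → ℝ => ∑ j, a j * e j)
          = (fun q : ℝ × (Fin m → ℝ) => a 0 * q.1 + ∑ j, a j.succ * q.2 j) ∘ φ := by
        funext e
        simp [hφdef, MeasurableEquiv.piFinSuccAbove, Fin.sum_univ_succ, Fin.zero_succAbove,
          Fin.tail]
      rw [hcomp, ← Measure.map_map hg φ.measurable, hmp.map_eq]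
      have hsplit : (fun q : ℝ × (Fin m → ℝ) => a 0 * q.1 + ∑ j, a j.succ * q.2 j)
          = (fun q : ℝ × ℝ => q.1 + q.2) ∘
            (Prod.map (fun x : ℝ => a 0 * x) (fun y : Fin m → ℝ => ∑ j, a j.succ * y j)) := by
        funext q; rfl
      rw [hsplit, ← Measure.map_map measurable_add (hf1.prodMap hf2),
        ← Measure.map_prod_map _ _ hf1 hf2, gaussianReal_map_const_mul (a 0),
        map_weighted_sum v m (fun j => a j.succ), mul_zero, gaussian_conv]
      congr 1
      apply NNReal.eq
      push_cast
      rw [Real.coe_toNNReal _ (by positivity), Real.coe_toNNReal _ (by positivity),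
        Fin.sum_univ_succ]
      ring

lemma gaussian_tail_Ioi {v : ℝ≥0} (hv : v ≠ 0) {t : ℝ} (ht : 0 < t) :
    gaussianReal 0 v (Ioi t) ≤
      ENNReal.ofReal ((Real.sqrt (2 * π * v))⁻¹ * ((v : ℝ) / t) * rexp (-t ^ 2 / (2 * v))) := by
  have hv' : (0 : ℝ) < v := lt_of_le_of_ne v.coe_nonneg (by exact_mod_cast hv.symm)
  have hb : (0 : ℝ) < (2 * (v : ℝ))⁻¹ := by positivity
  set A : ℝ := (Real.sqrt (2 * π * v))⁻¹ with hA
  have hA0 : 0 ≤ A := by positivity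
  have hpdf : ∀ x : ℝ, gaussianPDFReal 0 v x = A * rexp (-(2 * (v : ℝ))⁻¹ * x ^ 2) := by
    intro x
    simp only [gaussianPDFReal, sub_zero, hA]
    congr 1
    field_simp
  rw [gaussianReal_apply_eq_integral 0 hv]
  apply ENNReal.ofReal_le_ofReal
  have key : ∫ x in Ioi t, gaussianPDFReal 0 v x ≤
      ∫ x in Ioi t, (A / t) * (x * rexp (-(2 * (v : ℝ))⁻¹ * x ^ 2)) := by
    refine setIntegral_mono_on ((integrable_gaussianPDFReal 0 v).integrableOn)
      (((integrable_mul_exp_neg_mul_sq hb).const_mul (A / t)).integrableOn)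
      measurableSet_Ioi ?_
    intro x hx
    rw [hpdf x]
    have hx' : t < x := hx
    have h1 : (1 : ℝ) ≤ x / t := (one_le_div ht).2 hx'.le
    have hexp : 0 < rexp (-(2 * (v : ℝ))⁻¹ * x ^ 2) := Real.exp_pos _
    calc A * rexp (-(2 * (v : ℝ))⁻¹ * x ^ 2)
        ≤ (x / t) * (A * rexp (-(2 * (v : ℝ))⁻¹ * x ^ 2)) := by
          have := mul_le_mul_of_nonneg_right h1 (mul_nonneg hA0 hexp.le)
          linarith
      _ = (A / t) * (x * rexp (-(2 * (v : ℝ))⁻¹ * x ^ 2)) := by ring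
  refine key.trans ?_
  rw [MeasureTheory.integral_const_mul, integral_Ioi_mul_exp hb t]
  have h2b : 2 * (2 * (v : ℝ))⁻¹ = (v : ℝ)⁻¹ := by field_simp
  rw [h2b]
  have : -(2 * (v : ℝ))⁻¹ * t ^ 2 = -t ^ 2 / (2 * v) := by field_simp
  rw [this]
  have heq : A / t * (rexp (-t ^ 2 / (2 * (v : ℝ))) / ((v : ℝ))⁻¹)
      = A * ((v : ℝ) / t) * rexp (-t ^ 2 / (2 * (v : ℝ))) := by
    field_simp
  rw [heq]

lemma gaussian_symm (v : ℝ≥0) :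
    Measure.map (fun x : ℝ => -x) (gaussianReal 0 v) = gaussianReal 0 v := by
  have h := gaussianReal_map_const_mul (μ := 0) (v := v) (-1)
  have h1 : (fun x : ℝ => -1 * x) = fun x : ℝ => -x := by funext x; ring
  rw [h1] at h
  rw [h, mul_zero]
  congr 1
  apply NNReal.eq
  push_cast
  norm_num

lemma gaussian_tail_abs {v : ℝ≥0} (hv : v ≠ 0) {t : ℝ} (ht : 0 < t) :
    gaussianReal 0 v {x : ℝ | t < |x|} ≤
      ENNReal.ofReal (2 * ((Real.sqrt (2 * π * v))⁻¹ * ((v : ℝ) / t) * rexp (-t ^ 2 / (2 * v)))) := by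
  have hset : {x : ℝ | t < |x|} ⊆ Ioi t ∪ Iio (-t) := by
    intro x hx
    have hx' : t < |x| := hx
    rcases lt_abs.1 hx' with h | h
    · exact Or.inl h
    · exact Or.inr (by simp only [mem_Iio]; linarith)
  have hIio : gaussianReal 0 v (Iio (-t)) = gaussianReal 0 v (Ioi t) := by
    conv_lhs => rw [← gaussian_symm v]
    rw [Measure.map_apply measurable_neg measurableSet_Iio]
    congr 1
    ext x
    simp
  calc gaussianReal 0 v {x : ℝ | t < |x|}
      ≤ gaussianReal 0 v (Ioi t ∪ Iio (-t)) := measure_mono hset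
    _ ≤ gaussianReal 0 v (Ioi t) + gaussianReal 0 v (Iio (-t)) := measure_union_le _ _
    _ = gaussianReal 0 v (Ioi t) + gaussianReal 0 v (Ioi t) := by rw [hIio]
    _ ≤ ENNReal.ofReal ((Real.sqrt (2 * π * v))⁻¹ * ((v : ℝ) / t) * rexp (-t ^ 2 / (2 * v)))
        + ENNReal.ofReal ((Real.sqrt (2 * π * v))⁻¹ * ((v : ℝ) / t) * rexp (-t ^ 2 / (2 * v))) :=
        add_le_add (gaussian_tail_Ioi hv ht) (gaussian_tail_Ioi hv ht)
    _ = ENNReal.ofReal (2 * ((Real.sqrt (2 * π * v))⁻¹ * ((v : ℝ) / t) * rexp (-t ^ 2 / (2 * v)))) := by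
        rw [← ENNReal.ofReal_add (by positivity) (by positivity)]
        ring_nf

end Aux

set_option maxHeartbeats 1000000 in
theorem gaussian_noise_event_bound (n p : ℕ) (σ α : ℝ) (hσ : 0 < σ) (hα : 0 < α)
    (hp : 1 < p)
    (Xt : Matrix (Fin n) (Fin p) ℝ)
    (hcol : ∀ i : Fin p, ∑ j, (Xt j i) ^ 2 = 1) :
    (Measure.pi fun _ : Fin n => gaussianReal 0 (Real.toNNReal (σ ^ 2)))
      {e : Fin n → ℝ | ∀ γ : Finset (Fin p),
        ∑ i ∈ γ, (∑ j, Xt j i * e j) ^ 2 ≤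
          4 * σ ^ 2 * (1 + α) * γ.card * Real.log p} >
      ENNReal.ofReal (1 - 1 / ((p : ℝ) ^ α * Real.sqrt (Real.pi * Real.log p))) := by
  classical
  set v : ℝ≥0 := Real.toNNReal (σ ^ 2) with hvdef
  have hvcoe : (v : ℝ) = σ ^ 2 := Real.coe_toNNReal _ (sq_nonneg σ)
  have hvpos : (0 : ℝ) < v := by rw [hvcoe]; positivity
  have hvne : v ≠ 0 := by
    intro h
    rw [h] at hvpos
    simp at hvpos
  set L : ℝ := Real.log p with hLdef
  have hp1 : (1 : ℝ) < p := by exact_mod_cast hp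
  have hppos : (0 : ℝ) < p := by positivity
  have hL : 0 < L := Real.log_pos hp1
  have hsα : 0 < (1 + α) * L := by positivity
  set t : ℝ := 2 * σ * Real.sqrt ((1 + α) * L) with htdef
  have hsqα : 0 < Real.sqrt ((1 + α) * L) := Real.sqrt_pos.2 hsα
  have ht : 0 < t := by rw [htdef]; positivity
  have ht2 : t ^ 2 = 4 * σ ^ 2 * ((1 + α) * L) := by
    rw [htdef, mul_pow, mul_pow, Real.sq_sqrt hsα.le]
    ring
  set B : ℝ := 2 * ((Real.sqrt (2 * π * (v : ℝ)))⁻¹ * ((v : ℝ) / t) * rexp (-t ^ 2 / (2 * (v : ℝ))))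
    with hBdef
  have hsqrt2πv : 0 < Real.sqrt (2 * π * (v : ℝ)) :=
    Real.sqrt_pos.2 (mul_pos (mul_pos two_pos Real.pi_pos) hvpos)
  have hBpos : 0 < B := by
    rw [hBdef]
    exact mul_pos two_pos (mul_pos (mul_pos (inv_pos.2 hsqrt2πv) (div_pos hvpos ht))
      (Real.exp_pos _))
  -- arithmetic: p * B < 1 / (p^α * sqrt (π L))
  have hpa : (p : ℝ) ^ α = rexp (α * L) := by
    rw [Real.rpow_def_of_pos hppos, ← hLdef, mul_comm]
  have hRpos : 0 < Real.sqrt (2 * π) * Real.sqrt ((1 + α) * L) := by positivity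
  have hBval : (p : ℝ) * B = rexp (-(1 + 2 * α) * L) /
      (Real.sqrt (2 * π) * Real.sqrt ((1 + α) * L)) := by
    have hsqrt : Real.sqrt (2 * π * (v : ℝ)) = Real.sqrt (2 * π) * σ := by
      rw [hvcoe, Real.sqrt_mul (by positivity), Real.sqrt_sq hσ.le]
    have hexp1 : -t ^ 2 / (2 * (v : ℝ)) = -(2 * ((1 + α) * L)) := by
      rw [ht2, hvcoe]
      field_simp
      ring
    have hp_exp : (p : ℝ) = rexp L := (Real.exp_log hppos).symm
    rw [hBdef, hsqrt, hexp1, hvcoe, htdef, hp_exp,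
      show -(1 + 2 * α) * L = L + -(2 * ((1 + α) * L)) by ring, Real.exp_add]
    have h2π : Real.sqrt (2 * π) ≠ 0 := by positivity
    have hsq' : Real.sqrt ((1 + α) * L) ≠ 0 := ne_of_gt hsqα
    field_simp
  have hπL : 0 < Real.sqrt (π * L) := Real.sqrt_pos.2 (by positivity)
  have hkey : (p : ℝ) * B < 1 / ((p : ℝ) ^ α * Real.sqrt (π * L)) := by
    have hD : 1 / ((p : ℝ) ^ α * Real.sqrt (π * L)) = rexp (-(α * L)) / Real.sqrt (π * L) := by
      rw [hpa, Real.exp_neg]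
      field_simp
    rw [hBval, hD]
    have hRgt : Real.sqrt (π * L) < Real.sqrt (2 * π) * Real.sqrt ((1 + α) * L) := by
      rw [← Real.sqrt_mul (by positivity)]
      refine Real.sqrt_lt_sqrt (by positivity) ?_
      nlinarith [mul_pos Real.pi_pos hL, mul_pos hα (mul_pos Real.pi_pos hL)]
    have hnum : rexp (-(1 + 2 * α) * L) < rexp (-(α * L)) := by
      apply Real.exp_lt_exp.2
      nlinarith
    rw [div_lt_div_iff₀ hRpos hπL]
    nlinarith [Real.exp_pos (-(1 + 2 * α) * L), Real.exp_pos (-(α * L)),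
      mul_lt_mul_of_pos_left hRgt (Real.exp_pos (-(α * L))),
      mul_lt_mul_of_pos_right hnum hπL]
  have hD1 : 1 / ((p : ℝ) ^ α * Real.sqrt (π * L)) < 1 := by
    rw [div_lt_one (by positivity)]
    have h2 : Real.log 2 ≤ L := by
      rw [hLdef]
      exact Real.log_le_log (by norm_num) (by exact_mod_cast hp)
    have h3 : (0.6931471803 : ℝ) < Real.log 2 := Real.log_two_gt_d9
    have h4 : (3.14 : ℝ) < π := by
      have := Real.pi_gt_d2
      linarith
    have h5 : 1 < Real.sqrt (π * L) := by
      have e1 : (3.14 : ℝ) * 0.6931471803 ≤ 3.14 * Real.log 2 :=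
        mul_le_mul_of_nonneg_left h3.le (by norm_num)
      have e2 : (3.14 : ℝ) * Real.log 2 ≤ π * Real.log 2 :=
        mul_le_mul_of_nonneg_right h4.le (by linarith)
      have e3 : π * Real.log 2 ≤ π * L := mul_le_mul_of_nonneg_left h2 Real.pi_pos.le
      have e4 : (1 : ℝ) < π * L := by
        have : (1 : ℝ) < 3.14 * 0.6931471803 := by norm_num
        linarith
      rw [show (1 : ℝ) = Real.sqrt 1 by simp]
      exact Real.sqrt_lt_sqrt (by norm_num) e4
    have h6 : 1 ≤ (p : ℝ) ^ α := by
      rw [hpa]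
      exact Real.one_le_exp (by positivity)
    exact one_lt_mul h6 h5
  have hpB1 : (p : ℝ) * B < 1 := lt_trans hkey hD1
  have hpB0 : 0 ≤ (p : ℝ) * B := le_of_lt (mul_pos hppos hBpos)
  -- measure part
  set μ := Measure.pi fun _ : Fin n => gaussianReal 0 v with hμdef
  haveI : IsProbabilityMeasure μ := by rw [hμdef]; infer_instance
  set S : Set (Fin n → ℝ) :=
    {e | ∀ i : Fin p, (∑ j, Xt j i * e j) ^ 2 ≤ 4 * σ ^ 2 * ((1 + α) * L)} with hSdef
  have hmeasL : ∀ i : Fin p, Measurable fun e : Fin n → ℝ => ∑ j, Xt j i * e j := fun i =>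
    Finset.measurable_sum _ fun j _ => (measurable_pi_apply j).const_mul _
  have hsub : S ⊆ {e : Fin n → ℝ | ∀ γ : Finset (Fin p),
      ∑ i ∈ γ, (∑ j, Xt j i * e j) ^ 2 ≤ 4 * σ ^ 2 * (1 + α) * γ.card * L} := by
    intro e he γ
    calc ∑ i ∈ γ, (∑ j, Xt j i * e j) ^ 2
        ≤ ∑ _i ∈ γ, 4 * σ ^ 2 * ((1 + α) * L) := Finset.sum_le_sum fun i _ => he i
      _ = γ.card * (4 * σ ^ 2 * ((1 + α) * L)) := by rw [Finset.sum_const, nsmul_eq_mul]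
      _ = 4 * σ ^ 2 * (1 + α) * γ.card * L := by ring
  have hsetm : MeasurableSet {x : ℝ | ¬ x ^ 2 ≤ 4 * σ ^ 2 * ((1 + α) * L)} :=
    ((measurableSet_le (measurable_id.pow_const 2) measurable_const)).compl
  have htail : ∀ i : Fin p,
      μ {e | ¬ (∑ j, Xt j i * e j) ^ 2 ≤ 4 * σ ^ 2 * ((1 + α) * L)} ≤ ENNReal.ofReal B := by
    intro i
    have hpre : {e : Fin n → ℝ | ¬ (∑ j, Xt j i * e j) ^ 2 ≤ 4 * σ ^ 2 * ((1 + α) * L)}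
        = (fun e : Fin n → ℝ => ∑ j, Xt j i * e j) ⁻¹'
          {x : ℝ | ¬ x ^ 2 ≤ 4 * σ ^ 2 * ((1 + α) * L)} := rfl
    rw [hpre, ← Measure.map_apply (hmeasL i) hsetm, hμdef,
      map_weighted_sum v n (fun j => Xt j i), hcol i]
    have h1v : Real.toNNReal 1 * v = v := by simp
    rw [h1v]
    have hseteq : {x : ℝ | ¬ x ^ 2 ≤ 4 * σ ^ 2 * ((1 + α) * L)} = {x : ℝ | t < |x|} := by
      ext x
      simp only [mem_setOf_eq, not_le]
      constructor
      · intro h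
        by_contra h'
        push_neg at h'
        nlinarith [sq_abs x, abs_nonneg x]
      · intro h
        nlinarith [sq_abs x, abs_nonneg x]
    rw [hseteq]
    exact gaussian_tail_abs hvne ht
  have hcompl : μ Sᶜ ≤ ENNReal.ofReal ((p : ℝ) * B) := by
    have h1 : Sᶜ ⊆ ⋃ i : Fin p,
        {e : Fin n → ℝ | ¬ (∑ j, Xt j i * e j) ^ 2 ≤ 4 * σ ^ 2 * ((1 + α) * L)} := by
      intro e he
      simp only [hSdef, mem_compl_iff, mem_setOf_eq, not_forall] at he
      obtain ⟨i, hi⟩ := he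
      exact mem_iUnion.2 ⟨i, hi⟩
    calc μ Sᶜ ≤ μ (⋃ i : Fin p,
          {e : Fin n → ℝ | ¬ (∑ j, Xt j i * e j) ^ 2 ≤ 4 * σ ^ 2 * ((1 + α) * L)}) :=
        measure_mono h1
      _ ≤ ∑ i : Fin p, μ {e : Fin n → ℝ | ¬ (∑ j, Xt j i * e j) ^ 2 ≤ 4 * σ ^ 2 * ((1 + α) * L)} :=
        measure_iUnion_fintype_le _ _
      _ ≤ ∑ _i : Fin p, ENNReal.ofReal B := Finset.sum_le_sum fun i _ => htail i
      _ = (p : ℝ≥0∞) * ENNReal.ofReal B := by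
          rw [Finset.sum_const, Finset.card_univ, Fintype.card_fin, nsmul_eq_mul]
      _ = ENNReal.ofReal ((p : ℝ) * B) := by
          rw [← ENNReal.ofReal_natCast p, ← ENNReal.ofReal_mul (by positivity)]
  have h6 : 1 - ENNReal.ofReal ((p : ℝ) * B) ≤ μ S := by
    have hu : (1 : ℝ≥0∞) ≤ μ S + μ Sᶜ := by
      have h := measure_union_le (μ := μ) S Sᶜ
      rw [union_compl_self] at h
      calc (1 : ℝ≥0∞) = μ univ := (measure_univ).symm
        _ ≤ μ S + μ Sᶜ := h
    calc 1 - ENNReal.ofReal ((p : ℝ) * B) ≤ 1 - μ Sᶜ := tsub_le_tsub_left hcompl 1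
      _ ≤ μ S := tsub_le_iff_right.2 hu
  have h7 : ENNReal.ofReal (1 - 1 / ((p : ℝ) ^ α * Real.sqrt (π * L)))
      < 1 - ENNReal.ofReal ((p : ℝ) * B) := by
    rw [← ENNReal.ofReal_one, ← ENNReal.ofReal_sub _ hpB0]
    exact (ENNReal.ofReal_lt_ofReal_iff (by linarith)).2 (by linarith)
  exact lt_of_lt_of_le h7 (h6.trans (measure_mono hsub))
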